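/- Let V and W be finite-dimensional complex vector spaces, X ⊆ Hom(V,W) an irreducible closed subvariety, and f ∈ X a point at which X is smooth and rk f is maximal among elements of X. If g is a tangent vector to X at f (i.e., there is an analytic arc F(t) = f + g·t + O(t²) in X), then g(ker f) ⊆ im f. -/

import Mathlib

open Module

private lemma aux_det_diffAt {n : ℕ} {M : ℝ → Matrix (Fin n) (Fin n) ℂ} {x : ℝ}
    (h : ∀ i j, DifferentiableAt ℝ (fun t => M t i j) x) :
    DifferentiableAt ℝ (fun t => (M t).det) x := by
  simp only [Matrix.det_apply']
  exact DifferentiableAt.fun_sum fun σ _ =>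
    DifferentiableAt.const_mul
      ((HasDerivAt.fun_finsetProd (u := Finset.univ)
        (fun i _ => ((h (σ i) i).hasDerivAt))).differentiableAt) _

/-- Infinitesimal ker/coker lemma: if `X ⊆ Hom(V,W)` is closed, `f ∈ X` has maximal
rank among elements of `X`, and `g` is tangent to `X` at `f` (witnessed by a
differentiable arc `F : (-ε,ε) → X` with `F 0 = f`, `F' 0 = g`), then
`g(ker f) ⊆ im f`. -/
theorem stmt0 {V W : Type*} [NormedAddCommGroup V] [NormedSpace ℂ V]
    [FiniteDimensional ℂ V] [NormedAddCommGroup W] [NormedSpace ℂ W]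
    [FiniteDimensional ℂ W]
    (X : Set (V →L[ℂ] W)) (hXcl : IsClosed X)
    (f g : V →L[ℂ] W) (hf : f ∈ X)
    (hmax : ∀ h ∈ X, finrank ℂ (LinearMap.range ((h : V →L[ℂ] W) : V →ₗ[ℂ] W)) ≤
      finrank ℂ (LinearMap.range ((f : V →L[ℂ] W) : V →ₗ[ℂ] W)))
    (F : ℝ → (V →L[ℂ] W)) (ε : ℝ) (hε : 0 < ε)
    (hFX : ∀ t ∈ Set.Ioo (-ε) ε, F t ∈ X)
    (hF0 : F 0 = f)
    (hF' : HasDerivAt F g 0) :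
    ∀ u ∈ LinearMap.ker ((f : V →L[ℂ] W) : V →ₗ[ℂ] W),
      g u ∈ LinearMap.range ((f : V →L[ℂ] W) : V →ₗ[ℂ] W) := by
  intro u hu
  by_contra hgu
  classical
  have hfu : f u = 0 := hu
  set R : Submodule ℂ W := LinearMap.range ((f : V →L[ℂ] W) : V →ₗ[ℂ] W) with hRdef
  set r : ℕ := finrank ℂ R with hrdef
  let b : Basis (Fin r) ℂ R := finBasis ℂ R
  have heb : ∀ j, ∃ v, f v = (b j : W) := fun j => (b j).2
  choose e he using heb
  obtain ⟨Q, hQ⟩ := Submodule.exists_isCompl R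
  let π : W →ₗ[ℂ] R := R.projectionOnto Q hQ
  obtain ⟨φ, hφ1, hφ2⟩ := Submodule.exists_dual_map_eq_bot_of_notMem hgu inferInstance
  have hφR : ∀ w ∈ R, φ w = 0 := by
    intro w hw
    have : φ w ∈ R.map φ := Submodule.mem_map_of_mem hw
    rw [hφ2] at this
    simpa using this
  let Ψ : Fin (r+1) → (W →ₗ[ℂ] ℂ) := Fin.snoc (fun i => (b.coord i).comp π) φ
  let E : Fin (r+1) → V := Fin.snoc e u
  -- the matrix of functional values along the arc
  let M : ℝ → Matrix (Fin (r+1)) (Fin (r+1)) ℂ :=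
    fun t => Matrix.of fun i j => Ψ i (F t (E j))
  -- each entry is differentiable with derivative Ψ i (g (E j))
  haveI : FiniteDimensional ℝ (V →L[ℂ] W) := Module.Finite.trans ℂ _
  have hMd : ∀ i j, HasDerivAt (fun t => M t i j) (Ψ i (g (E j))) 0 := by
    intro i j
    let T : (V →L[ℂ] W) →ₗ[ℝ] ℂ :=
      { toFun := fun h => Ψ i (h (E j))
        map_add' := fun a b => by simp
        map_smul' := fun c a => by simp }
    have := (LinearMap.toContinuousLinearMap T).hasFDerivAt (x := F 0)
    have h2 := this.comp_hasDerivAt 0 hF'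
    simpa [T, M, Function.comp_def] using h2
  -- values of M at 0
  have hcol : ∀ i, M 0 i (Fin.last r) = 0 := by
    intro i
    simp [M, E, hF0, Fin.snoc_last, hfu]
  have hrow : ∀ j : Fin r, M 0 (Fin.last r) j.castSucc = 0 := by
    intro j
    have : F 0 (E j.castSucc) = (b j : W) := by
      simp [E, hF0, Fin.snoc_castSucc, he]
    simp only [M, Matrix.of_apply, this, Ψ, Fin.snoc_last]
    exact hφR _ (b j).2
  have hblk : ∀ i j : Fin r, M 0 i.castSucc j.castSucc = if i = j then 1 else 0 := by
    intro i j
    have hF : F 0 (E j.castSucc) = (b j : W) := by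
      simp [E, hF0, Fin.snoc_castSucc, he]
    simp only [M, Matrix.of_apply, hF, Ψ, Fin.snoc_castSucc, LinearMap.comp_apply]
    have hπ : π (b j : W) = b j := Submodule.projectionOnto_apply_left hQ (b j)
    rw [hπ, Basis.coord_apply, Basis.repr_self, Finsupp.single_apply]
    simp [eq_comm]
  -- det (M t) = 0 for t in the interval, by the rank bound
  have hdet0 : ∀ t ∈ Set.Ioo (-ε) ε, (M t).det = 0 := by
    intro t ht
    have hrk : finrank ℂ (LinearMap.range ((F t : V →L[ℂ] W) : V →ₗ[ℂ] W)) ≤ r :=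
      hmax _ (hFX t ht)
    set Rt := LinearMap.range ((F t : V →L[ℂ] W) : V →ₗ[ℂ] W) with hRt
    have hw : ∀ j, F t (E j) ∈ Rt := fun j => LinearMap.mem_range_self _ _
    have hnli : ¬ LinearIndependent ℂ (fun j : Fin (r+1) => F t (E j)) := by
      intro hli
      have hli' : LinearIndependent ℂ (fun j : Fin (r+1) => (⟨F t (E j), hw j⟩ : Rt)) := by
        apply LinearIndependent.of_comp Rt.subtype
        exact hli
      have hcard := hli'.fintype_card_le_finrank
      simp only [Fintype.card_fin] at hcard
      omega
    obtain ⟨c, hc0, i0, hci⟩ := Fintype.not_linearIndependent_iff.mp hnli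
    apply Matrix.exists_mulVec_eq_zero_iff.mp
    refine ⟨c, fun hcc => hci (by rw [hcc]; rfl), ?_⟩
    funext i
    have : ∑ j, Ψ i (F t (E j)) * c j = Ψ i (∑ j, c j • F t (E j)) := by
      rw [map_sum]
      exact Finset.sum_congr rfl fun j _ => by rw [map_smul]; simp [mul_comm]
    simp only [Matrix.mulVec, dotProduct, M, Matrix.of_apply, Pi.zero_apply]
    rw [this, hc0, map_zero]
  -- the Laplace-expansion-along-last-column form
  let N : Fin (r+1) → ℝ → Matrix (Fin r) (Fin r) ℂ :=
    fun i t => (M t).submatrix i.succAbove (Fin.last r).succAbove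
  have hNd : ∀ i, HasDerivAt (fun t => (N i t).det) (deriv (fun t => (N i t).det) 0) 0 := by
    intro i
    exact (aux_det_diffAt (fun k l => (hMd _ _).differentiableAt)).hasDerivAt
  have hterm : ∀ i : Fin (r+1), HasDerivAt
      (fun t => (-1 : ℂ) ^ ((i : ℕ) + ((Fin.last r : Fin (r+1)) : ℕ)) * M t i (Fin.last r)
        * (N i t).det)
      (((-1 : ℂ) ^ ((i : ℕ) + r) * Ψ i (g (E (Fin.last r)))) * (N i 0).det
        + ((-1 : ℂ) ^ ((i : ℕ) + r) * M 0 i (Fin.last r)) * deriv (fun t => (N i t).det) 0)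
      0 := by
    intro i
    have := ((hMd i (Fin.last r)).const_mul ((-1 : ℂ) ^ ((i : ℕ) + r))).fun_mul (hNd i)
    simpa [Fin.val_last] using this
  have hD : HasDerivAt (fun t => (M t).det)
      (∑ i : Fin (r+1), (((-1 : ℂ) ^ ((i : ℕ) + r) * Ψ i (g (E (Fin.last r)))) * (N i 0).det
        + ((-1 : ℂ) ^ ((i : ℕ) + r) * M 0 i (Fin.last r)) * deriv (fun t => (N i t).det) 0))
      0 := by
    have hfun : (fun t => (M t).det)
        = fun t => ∑ i : Fin (r+1),
            (-1 : ℂ) ^ ((i : ℕ) + ((Fin.last r : Fin (r+1)) : ℕ)) * M t i (Fin.last r)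
              * (N i t).det := by
      funext t
      exact Matrix.det_succ_column (M t) (Fin.last r)
    rw [hfun]
    exact HasDerivAt.fun_sum fun i _ => hterm i
  -- the derivative is zero since det (M t) vanishes near 0
  have hzero : HasDerivAt (fun t => (M t).det) 0 0 := by
    have hmem : Set.Ioo (-ε) ε ∈ nhds (0 : ℝ) := Ioo_mem_nhds (by linarith) hε
    have hev : (fun t => (M t).det) =ᶠ[nhds (0 : ℝ)] (fun _ => (0 : ℂ)) :=
      Filter.eventuallyEq_of_mem hmem hdet0
    exact (hasDerivAt_const (0 : ℝ) (0 : ℂ)).congr_of_eventuallyEq hev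
  have hd0 := hD.unique hzero
  -- compute the derivative: it equals φ (g u)
  have hNlast : (N (Fin.last r) 0).det = 1 := by
    have : N (Fin.last r) 0 = 1 := by
      funext k l
      simp only [N, Matrix.submatrix_apply, Fin.succAbove_last]
      rw [hblk k l]
      simp [Matrix.one_apply]
    rw [this, Matrix.det_one]
  have hNcast : ∀ i : Fin r, (N i.castSucc 0).det = 0 := by
    intro i
    have hi : (i : ℕ) < r := i.isLt
    let k₀ : Fin r := ⟨r - 1, by omega⟩
    have hk₀ : i.castSucc.succAbove k₀ = Fin.last r := by
      rw [Fin.succAbove_of_le_castSucc]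
      · apply Fin.ext
        simp [k₀]
        omega
      · rw [Fin.le_def]
        simp [k₀]
        omega
    apply Matrix.det_eq_zero_of_row_eq_zero k₀
    intro l
    simp only [N, Matrix.submatrix_apply, hk₀, Fin.succAbove_last]
    exact hrow l
  have hsum : (∑ i : Fin (r+1), (((-1 : ℂ) ^ ((i : ℕ) + r) * Ψ i (g (E (Fin.last r))))
        * (N i 0).det
        + ((-1 : ℂ) ^ ((i : ℕ) + r) * M 0 i (Fin.last r)) * deriv (fun t => (N i t).det) 0))
      = φ (g u) := by
    rw [Fin.sum_univ_castSucc]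
    have h1 : ∀ i : Fin r, (((-1 : ℂ) ^ ((i.castSucc : ℕ) + r) * Ψ i.castSucc (g (E (Fin.last r))))
        * (N i.castSucc 0).det
        + ((-1 : ℂ) ^ ((i.castSucc : ℕ) + r) * M 0 i.castSucc (Fin.last r))
          * deriv (fun t => (N i.castSucc t).det) 0) = 0 := by
      intro i
      rw [hNcast i, hcol i.castSucc]
      ring
    rw [Finset.sum_congr rfl (fun i _ => h1 i), Finset.sum_const_zero, zero_add]
    rw [hNlast, hcol (Fin.last r)]
    have hΨlast : Ψ (Fin.last r) = φ := Fin.snoc_last _ _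
    have hElast : E (Fin.last r) = u := Fin.snoc_last _ _
    rw [hΨlast, hElast]
    have : ((-1 : ℂ)) ^ ((Fin.last r : ℕ) + r) = 1 := by
      rw [Fin.val_last]
      exact Even.neg_one_pow ⟨r, by ring⟩
    rw [this]
    ring
  rw [hsum] at hd0
  exact hφ1 hd0
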